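/- Let σ_1, …, σ_h ∈ Sym and let m, n ∈ ℕ with n ≥ hm + 1. Set D = (∪_{j=1}^h σ_j([m])) ∩ [n]. Then there exist σ ∈ Sym and τ_1, …, τ_h ∈ Sym(n) such that σ(k) = k for every k ∈ D, and σ(σ_j(i)) = τ_j(i) for all i ∈ [m] and all j ∈ [h]. -/

import Mathlib

open Finsupp

/-- A permutation of `ℕ` that moves only finitely many points:
an element of the infinite symmetric group `Sym`. -/
def IsFinPerm (σ : Equiv.Perm ℕ) : Prop := {i | σ i ≠ i}.Finite

/-- Membership in `Sym(n)`: permutations of `ℕ` fixing every index `≥ n`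
(the indices `0, 1, …, n-1` play the role of `[n] = {1, …, n}`). -/
def InSymN (n : ℕ) (σ : Equiv.Perm ℕ) : Prop := ∀ i, n ≤ i → σ i = i

/-- `u ∈ ℤ_{≥0}^{(I)}`. -/
def FsNonneg {I : Type*} (u : I →₀ ℤ) : Prop := ∀ i, 0 ≤ u i

/-- The partial order `⊑`. -/
def Sqle {I : Type*} (u v : I →₀ ℤ) : Prop := ∀ i, 0 ≤ u i * v i ∧ |u i| ≤ |v i|

/-- The Graver basis of (the underlying set of) a lattice `L`:
the `⊑`-minimal elements of `L \ {0}`. -/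
def GraverBasis {I : Type*} (L : Set (I →₀ ℤ)) : Set (I →₀ ℤ) :=
  {u | u ∈ L ∧ u ≠ 0 ∧ ∀ v ∈ L, v ≠ 0 → Sqle v u → v = u}

/-- The `L`-fiber of `u`. -/
def latFiber {I : Type*} (L : Set (I →₀ ℤ)) (u : I →₀ ℤ) : Set (I →₀ ℤ) :=
  {v | FsNonneg v ∧ u - v ∈ L}

/-- `B` is a Markov basis of `L`: for each nonnegative `u` the graph on the fiber
`F_L(u)` with edges `v ~ w` whenever `v - w ∈ B ∪ (-B)` is connected. -/
def IsMarkovBasis {I : Type*} (L B : Set (I →₀ ℤ)) : Prop :=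
  ∀ u, FsNonneg u → ∀ v ∈ latFiber L u, ∀ w ∈ latFiber L u,
    Relation.ReflTransGen
      (fun x y => x ∈ latFiber L u ∧ y ∈ latFiber L u ∧ (x - y ∈ B ∨ y - x ∈ B)) v w

/-- A term order on `ℤ_{≥0}^{(I)}`: an additive well-order on the nonnegative elements. -/
structure TermOrderZ (I : Type*) where
  lt : (I →₀ ℤ) → (I →₀ ℤ) → Prop
  irrefl : ∀ u, FsNonneg u → ¬ lt u u
  trans : ∀ u v w, FsNonneg u → FsNonneg v → FsNonneg w → lt u v → lt v w → lt u w
  total : ∀ u v, FsNonneg u → FsNonneg v → u ≠ v → lt u v ∨ lt v u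
  min_exists : ∀ S : Set (I →₀ ℤ), (∀ u ∈ S, FsNonneg u) → S.Nonempty →
    ∃ m ∈ S, ∀ u ∈ S, u ≠ m → ¬ lt u m
  add_right : ∀ u v w, FsNonneg u → FsNonneg v → FsNonneg w → lt u v → lt (u + w) (v + w)

/-- There is a directed path (w.r.t. `lt`, with moves from `B ∪ (-B)`) inside the fiber
of `u` from `u` to the `lt`-minimal element of the fiber. -/
def GroebnerPath {I : Type*} (L : Set (I →₀ ℤ)) (lt : (I →₀ ℤ) → (I →₀ ℤ) → Prop)
    (B : Set (I →₀ ℤ)) (u : I →₀ ℤ) : Prop :=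
  ∃ (s : ℕ) (v : ℕ → (I →₀ ℤ)), v 0 = u ∧ (∀ t ≤ s, v t ∈ latFiber L u) ∧
    (∀ t < s, lt (v (t + 1)) (v t) ∧ (v t - v (t + 1) ∈ B ∨ v (t + 1) - v t ∈ B)) ∧
    (∀ w ∈ latFiber L u, w ≠ v s → lt (v s) w)

/-- `B` is a Gröbner basis of `L` with respect to the term order `lt`. -/
def IsGroebnerBasis {I : Type*} (L : Set (I →₀ ℤ))
    (lt : (I →₀ ℤ) → (I →₀ ℤ) → Prop) (B : Set (I →₀ ℤ)) : Prop :=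
  ∀ u, FsNonneg u → GroebnerPath L lt B u

/-- `H` is a Hilbert basis of the (set underlying a) monoid `M`:
a generating set of `M` contained in every generating set of `M`. -/
def IsHilbertBasis {N : Type*} [AddCommMonoid N] (M H : Set N) : Prop :=
  H ⊆ M ∧ (AddSubmonoid.closure H : Set N) = M ∧
    ∀ A ⊆ M, (AddSubmonoid.closure A : Set N) = M → H ⊆ A

/-- `u` is an irreducible element of `M`. -/
def IsIrredElem {N : Type*} [AddCommMonoid N] (M : Set N) (u : N) : Prop :=
  u ∈ M ∧ u ≠ 0 ∧ ∀ v ∈ M, ∀ w ∈ M, u = v + w → v = 0 ∨ w = 0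

/-- The action of a permutation of `ℕ` on `ℤ^{(ℕ^d × [c])}`:
`(σ·u)((σ i₁, …, σ i_d), j) = u((i₁, …, i_d), j)`. -/
noncomputable def permActd (d c : ℕ) (σ : Equiv.Perm ℕ) (u : (Fin d → ℕ) × Fin c →₀ ℤ) :
    (Fin d → ℕ) × Fin c →₀ ℤ :=
  Finsupp.equivMapDomain
    (Equiv.prodCongr ((Equiv.refl (Fin d)).arrowCongr σ) (Equiv.refl (Fin c))) u

/-- The action of a permutation of `ℕ` on `ℤ^{(ℕ × [c])}`: `(σ·u)(σ i, j) = u(i, j)`. -/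
noncomputable def permAct1 (c : ℕ) (σ : Equiv.Perm ℕ) (u : ℕ × Fin c →₀ ℤ) :
    ℕ × Fin c →₀ ℤ :=
  Finsupp.equivMapDomain (Equiv.prodCongr σ (Equiv.refl (Fin c))) u

/-- The action of a permutation of `ℕ` on `ℤ^{(ℕ)}`: `(σ·u)(σ i) = u i`. -/
noncomputable def permAct0 (σ : Equiv.Perm ℕ) (u : ℕ →₀ ℤ) : ℕ →₀ ℤ :=
  Finsupp.equivMapDomain σ u

/-- `Sym(B)` for `B ⊆ ℤ^{(ℕ^d × [c])}`. -/
def symOrbitd (d c : ℕ) (B : Set ((Fin d → ℕ) × Fin c →₀ ℤ)) :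
    Set ((Fin d → ℕ) × Fin c →₀ ℤ) :=
  {w | ∃ σ, IsFinPerm σ ∧ ∃ b ∈ B, w = permActd d c σ b}

/-- `Sym(n)(B)` for `B ⊆ ℤ^{(ℕ^d × [c])}`. -/
def symOrbitNd (d c n : ℕ) (B : Set ((Fin d → ℕ) × Fin c →₀ ℤ)) :
    Set ((Fin d → ℕ) × Fin c →₀ ℤ) :=
  {w | ∃ σ, InSymN n σ ∧ ∃ b ∈ B, w = permActd d c σ b}

/-- `Sym(B)` for `B ⊆ ℤ^{(ℕ × [c])}`. -/
def symOrbit1 (c : ℕ) (B : Set (ℕ × Fin c →₀ ℤ)) : Set (ℕ × Fin c →₀ ℤ) :=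
  {w | ∃ σ, IsFinPerm σ ∧ ∃ b ∈ B, w = permAct1 c σ b}

/-- `Sym(B)` for `B ⊆ ℤ^{(ℕ)}`. -/
def symOrbit0 (B : Set (ℕ →₀ ℤ)) : Set (ℕ →₀ ℤ) :=
  {w | ∃ σ, IsFinPerm σ ∧ ∃ b ∈ B, w = permAct0 σ b}

/-- `supp(u) ⊆ I_n = [n]^d × [c]`. -/
def SuppIn (d c n : ℕ) (u : (Fin d → ℕ) × Fin c →₀ ℤ) : Prop :=
  ∀ p : (Fin d → ℕ) × Fin c, u p ≠ 0 → ∀ k, p.1 k < n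

/-- `ℤ^{(I_n)}`, for `I_n = [n]^d × [c]`, as a subgroup of `ℤ^{(ℕ^d × [c])}`. -/
noncomputable def suppSubgroup (d c n : ℕ) : AddSubgroup ((Fin d → ℕ) × Fin c →₀ ℤ) where
  carrier := {u | SuppIn d c n u}
  zero_mem' := by intro p hp; simp at hp
  add_mem' := by
    intro a b ha hb p hp k
    by_cases h : a p = 0
    · refine hb p ?_ k
      intro hbp
      exact hp (by simp [h, hbp])
    · exact ha p h k
  neg_mem' := by
    intro a ha p hp k
    refine ha p ?_ k
    intro hap
    exact hp (by simp [hap])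

/-- The positive part `u⁺`. -/
noncomputable def fsPos {I : Type*} (u : I →₀ ℤ) : I →₀ ℤ :=
  u.mapRange (fun z => max z 0) (by simp)

/-- The negative part `u⁻`. -/
noncomputable def fsNeg {I : Type*} (u : I →₀ ℤ) : I →₀ ℤ :=
  u.mapRange (fun z => max (-z) 0) (by simp)

/-- Given finitary permutations `σ_1, …, σ_h` of `ℕ`, `m ≥ 1` and
`n ≥ h·m + 1`, with `D = (⋃ⱼ σⱼ([m])) ∩ [n]`, there are `σ ∈ Sym` and
`τ_1, …, τ_h ∈ Sym(n)` with `σ` the identity on `D` and `σ ∘ σⱼ = τⱼ` on `[m]`. -/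
theorem pull_permutation (h m n : ℕ) (hm : 1 ≤ m) (hn : h * m + 1 ≤ n)
    (σ : Fin h → Equiv.Perm ℕ) (hσ : ∀ j, IsFinPerm (σ j)) :
    ∃ τ : Equiv.Perm ℕ, IsFinPerm τ ∧
      ∃ ρ : Fin h → Equiv.Perm ℕ, (∀ j, InSymN n (ρ j)) ∧
        (∀ k, k ∈ (⋃ j, (σ j) '' {i | i < m}) ∩ {k | k < n} → τ k = k) ∧
        (∀ j, ∀ i < m, τ ((σ j) i) = (ρ j) i) := by
  classical
  -- `S` = union of the images of `[m]` under the `σ j`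
  set S : Finset ℕ := Finset.univ.biUnion (fun j : Fin h => (Finset.range m).image (σ j)) with hSdef
  have hmemS : ∀ (j : Fin h) (i : ℕ), i < m → σ j i ∈ S := by
    intro j i hi
    simp only [hSdef, Finset.mem_biUnion, Finset.mem_univ, Finset.mem_image, Finset.mem_range]
    exact ⟨j, by simp, i, hi, rfl⟩
  have hScard : S.card ≤ h * m := by
    calc S.card ≤ ∑ j : Fin h, ((Finset.range m).image (σ j)).card := Finset.card_biUnion_le
      _ ≤ ∑ _j : Fin h, m := Finset.sum_le_sum (fun j _ =>
            (Finset.card_image_le).trans (by simp))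
      _ = h * m := by simp [Finset.sum_const, mul_comm]
  set A : Finset ℕ := S \ Finset.range n with hAdef
  set B : Finset ℕ := Finset.range n \ S with hBdef
  have hAB : A.card ≤ B.card := by
    have h1 := Finset.card_sdiff_add_card_inter S (Finset.range n)
    rw [← hAdef] at h1
    have h2 := Finset.card_sdiff_add_card_inter (Finset.range n) S
    rw [← hBdef, Finset.card_range, Finset.inter_comm] at h2
    omega
  obtain ⟨B', hB'sub, hB'card⟩ := Finset.exists_subset_card_eq hAB
  have e : (A : Type) ≃ (B' : Type) := Finset.equivOfCardEq hB'card.symm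
  have hdisj : ∀ x, x ∈ A → x ∉ B' := by
    intro x hxA hxB'
    have h1 : x ∉ Finset.range n := (Finset.mem_sdiff.mp hxA).2
    have h2 : x ∈ Finset.range n := (Finset.mem_sdiff.mp (hB'sub hxB')).1
    exact h1 h2
  set F : ℕ → ℕ := fun x =>
    if hx : x ∈ A then (e ⟨x, hx⟩ : ℕ)
    else if hx' : x ∈ B' then (e.symm ⟨x, hx'⟩ : ℕ) else x with hFdef
  have hFA : ∀ x (hx : x ∈ A), F x = (e ⟨x, hx⟩ : ℕ) := fun x hx => dif_pos hx
  have hFB : ∀ x (hx : x ∉ A) (hx' : x ∈ B'), F x = (e.symm ⟨x, hx'⟩ : ℕ) := by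
    intro x hx hx'
    rw [hFdef]; simp only [dif_neg hx, dif_pos hx']
  have hFid : ∀ x, x ∉ A → x ∉ B' → F x = x := by
    intro x hx hx'
    rw [hFdef]; simp only [dif_neg hx, dif_neg hx']
  have hFinv : Function.Involutive F := by
    intro x
    by_cases hx : x ∈ A
    · rw [hFA x hx]
      have hmem : (e ⟨x, hx⟩ : ℕ) ∈ B' := (e ⟨x, hx⟩).2
      have hnA : (e ⟨x, hx⟩ : ℕ) ∉ A := fun hc => hdisj _ hc hmem
      rw [hFB _ hnA hmem]
      have : (⟨(e ⟨x, hx⟩ : ℕ), hmem⟩ : {y // y ∈ B'}) = e ⟨x, hx⟩ := Subtype.ext rfl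
      rw [this, Equiv.symm_apply_apply]
    · by_cases hx' : x ∈ B'
      · rw [hFB x hx hx']
        have hmem : (e.symm ⟨x, hx'⟩ : ℕ) ∈ A := (e.symm ⟨x, hx'⟩).2
        rw [hFA _ hmem]
        have : (⟨(e.symm ⟨x, hx'⟩ : ℕ), hmem⟩ : {y // y ∈ A}) = e.symm ⟨x, hx'⟩ :=
          Subtype.ext rfl
        rw [this, Equiv.apply_symm_apply]
      · rw [hFid x hx hx', hFid x hx hx']
  set τ : Equiv.Perm ℕ := hFinv.toPerm with hτdef
  have hτapp : ∀ x, τ x = F x := fun x => rfl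
  have hτfin : IsFinPerm τ := by
    apply Set.Finite.subset ((A ∪ B').finite_toSet)
    intro x hx
    by_contra hc
    simp only [Finset.coe_union, Set.mem_union, Finset.mem_coe] at hc
    push_neg at hc
    exact hx (by rw [hτapp, hFid x hc.1 hc.2])
  have hfix : ∀ k, k ∈ S → k < n → τ k = k := by
    intro k hkS hkn
    have hkA : k ∉ A := by
      intro hc
      exact (Finset.mem_sdiff.mp hc).2 (Finset.mem_range.mpr hkn)
    have hkB : k ∉ B' := by
      intro hc
      exact (Finset.mem_sdiff.mp (hB'sub hc)).2 hkS
    rw [hτapp, hFid k hkA hkB]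
  have hlt : ∀ x, x ∈ S → τ x < n := by
    intro x hxS
    by_cases hxn : x < n
    · rw [hfix x hxS hxn]; exact hxn
    · have hxA : x ∈ A := Finset.mem_sdiff.mpr ⟨hxS, by simp [Finset.mem_range]; omega⟩
      rw [hτapp, hFA x hxA]
      have hmem : (e ⟨x, hxA⟩ : ℕ) ∈ B' := (e ⟨x, hxA⟩).2
      exact Finset.mem_range.mp (Finset.mem_sdiff.mp (hB'sub hmem)).1
  -- construct the ρ j
  have key : ∀ j : Fin h, ∃ ρj : Equiv.Perm ℕ, InSymN n ρj ∧ ∀ i < m, τ (σ j i) = ρj i := by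
    intro j
    have hh : 0 < h := j.pos
    have hmn : m < n := by
      have : m ≤ h * m := Nat.le_mul_of_pos_left m hh
      omega
    set f : Fin n → ℕ := fun i => τ (σ j i.val) with hfdef
    set s : Finset (Fin n) := Finset.univ.filter (fun i => i.val < m) with hsdef
    have hinj : Set.InjOn f (s : Set (Fin n)) := by
      intro a _ b _ hab
      have := τ.injective hab
      have := (σ j).injective this
      exact Fin.val_injective this
    have himg : s.image f ⊆ Finset.range n := by
      intro x hx
      simp only [Finset.mem_image] at hx
      obtain ⟨i, hi, rfl⟩ := hx
      have him : i.val < m := by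
        simp only [hsdef, Finset.mem_filter] at hi; exact hi.2
      exact Finset.mem_range.mpr (hlt _ (hmemS j i.val him))
    have hαt : Fintype.card (Fin n) = (Finset.range n).card := by simp
    obtain ⟨g, hg⟩ := Finset.exists_equiv_extend_of_card_eq hαt himg hinj
    set π : Equiv.Perm {x : ℕ // x < n} :=
      (Fin.equivSubtype).symm.trans
        (g.trans (Equiv.subtypeEquivRight (fun x => Finset.mem_range))) with hπdef
    refine ⟨Equiv.Perm.subtypeCongr π (Equiv.refl {x : ℕ // ¬ x < n}), ?_, ?_⟩
    · intro i hi
      have hni : ¬ i < n := by omega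
      rw [Equiv.Perm.subtypeCongr.apply π (Equiv.refl _) i, dif_neg hni]; rfl
    · intro i hi
      have hin : i < n := lt_trans hi hmn
      rw [Equiv.Perm.subtypeCongr.apply π (Equiv.refl _) i, dif_pos hin]
      have h1 : (Fin.equivSubtype).symm ⟨i, hin⟩ = (⟨i, hin⟩ : Fin n) := rfl
      have h2 : (⟨i, hin⟩ : Fin n) ∈ s := by
        simp only [hsdef, Finset.mem_filter]
        exact ⟨Finset.mem_univ _, hi⟩
      have h3 : (g ⟨i, hin⟩ : ℕ) = f ⟨i, hin⟩ := hg _ h2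
      simp only [hπdef, Equiv.trans_apply, h1]
      rw [Equiv.subtypeEquivRight]
      exact h3.symm
  choose ρ hρ1 hρ2 using key
  refine ⟨τ, hτfin, ρ, hρ1, ?_, fun j i hi => hρ2 j i hi⟩
  intro k hk
  obtain ⟨hk1, hk2⟩ := hk
  simp only [Set.mem_iUnion, Set.mem_image, Set.mem_setOf_eq] at hk1 hk2
  obtain ⟨j, i, hi, rfl⟩ := hk1
  exact hfix _ (hmemS j i hi) hk2
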